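/- (Evolution of the Hubble variable.) Let Λ ∈ ℝ. Suppose on [t₀,T] we are given differentiable symmetric matrix-valued functions g^{ab}(t) (positive definite) and k^{ab}(t), a continuous symmetric matrix-valued function S^{ab}(t) and a continuous function ρ(t), satisfying dg^{ab}/dt = −2k^{ab} and dk^{ab}/dt = −2k^a_c k^{bc} − k k^{ab} + S^{ab} + (1/2)(ρ−S)g^{ab} + Λg^{ab}. Then the Hubble variable H = (1/3) g_{ab}k^{ab} is differentiable and satisfies dH/dt = −3H² + (1/2)ρ − (1/6)S + Λ. -/

import Mathlib

open Matrix Real Set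

noncomputable section

attribute [local instance] Matrix.linftyOpNormedRing Matrix.linftyOpNormedAlgebra

/-- 3×3 real matrices. -/
abbrev Mat3 := Matrix (Fin 3) (Fin 3) ℝ

/-- The trace `g_{ab} M^{ab}` of a matrix with upper indices (indices lowered with `G⁻¹`). -/
def trK (G M : Mat3) : ℝ := ∑ a, ∑ b, G⁻¹ a b * M a b

/-- The Hubble variable `H = (1/3) g_{ab} k^{ab}`. -/
def Hub (G K : Mat3) : ℝ := (1 / 3) * trK G K

/-- The right hand side of the evolution equation for `k^{ab}` with abstract matter terms. -/
def kEvolAbs (Λ : ℝ) (G K SM : Mat3) (ρ : ℝ) : Mat3 :=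
  (-2 : ℝ) • (K * G⁻¹ * K) - trK G K • K + SM + ((1 / 2) * (ρ - trK G SM)) • G + Λ • G

lemma sum_mul_eq_trace (M N : Mat3) : (∑ a, ∑ b, M a b * N a b) = (Mᵀ * N).trace := by
  rw [Matrix.trace]
  simp only [Matrix.diag_apply, Matrix.mul_apply, Matrix.transpose_apply]
  exact Finset.sum_comm

/-- entry map as a continuous linear map -/
def entryCLM (a b : Fin 3) : Mat3 →L[ℝ] ℝ :=
  LinearMap.toContinuousLinearMap
    { toFun := fun M => M a b
      map_add' := fun _ _ => rfl
      map_smul' := fun _ _ => rfl }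

lemma key (Λ ρ : ℝ) (G K S : Mat3) (hG : Gᵀ = G) (hK : Kᵀ = K) (hU : IsUnit G.det) :
    (1/3) * (∑ a, ∑ b, (((2:ℝ) • (G⁻¹ * K * G⁻¹)) a b * K a b
        + G⁻¹ a b * kEvolAbs Λ G K S ρ a b))
      = -3 * Hub G K ^ 2 + 1 / 2 * ρ - 1 / 6 * trK G S + Λ := by
  have hA : G⁻¹ᵀ = G⁻¹ := by rw [Matrix.transpose_nonsing_inv, hG]
  have hAG : G⁻¹ * G = 1 := Matrix.nonsing_inv_mul G hU
  have hsplit : (∑ a, ∑ b, (((2:ℝ) • (G⁻¹ * K * G⁻¹)) a b * K a b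
        + G⁻¹ a b * kEvolAbs Λ G K S ρ a b))
      = (((2:ℝ) • (G⁻¹ * K * G⁻¹))ᵀ * K).trace + (G⁻¹ᵀ * kEvolAbs Λ G K S ρ).trace := by
    rw [← sum_mul_eq_trace, ← sum_mul_eq_trace]
    simp [Finset.sum_add_distrib]
  rw [hsplit, hA]
  have ht2 : ((2:ℝ) • (G⁻¹ * K * G⁻¹))ᵀ = (2:ℝ) • (G⁻¹ * K * G⁻¹) := by
    rw [Matrix.transpose_smul, Matrix.transpose_mul, Matrix.transpose_mul, hA, hK,
      Matrix.mul_assoc]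
  rw [ht2, kEvolAbs]
  have htrK : trK G K = (G⁻¹ * K).trace := by rw [trK, sum_mul_eq_trace, hA]
  have htrS : trK G S = (G⁻¹ * S).trace := by rw [trK, sum_mul_eq_trace, hA]
  simp only [Matrix.mul_add, Matrix.mul_sub, Matrix.mul_smul, Matrix.smul_mul,
    Matrix.trace_add, Matrix.trace_sub, Matrix.trace_smul, hAG, Matrix.trace_one,
    smul_eq_mul, Hub, htrK, htrS, Matrix.mul_assoc]
  simp only [Fintype.card_fin]
  ring

/-- evolution of the Hubble variable. If `g, k` satisfy the Einstein
evolution equations with matter terms `S^{ab}`, `ρ`, then `H = (1/3) g_{ab}k^{ab}` is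
differentiable with `dH/dt = −3H² + (1/2)ρ − (1/6)S + Λ`, where `S = g_{ab}S^{ab}`. -/
theorem stmt15 (Λ t₀ T : ℝ) (hT : t₀ ≤ T)
    (g k SM : ℝ → Mat3) (ρ : ℝ → ℝ)
    (hgpd : ∀ t ∈ Icc t₀ T, (g t).PosDef)
    (hksym : ∀ t ∈ Icc t₀ T, (k t).IsSymm)
    (hSsym : ∀ t ∈ Icc t₀ T, (SM t).IsSymm)
    (hScont : ∀ a b : Fin 3, ContinuousOn (fun t => SM t a b) (Icc t₀ T))
    (hρcont : ContinuousOn ρ (Icc t₀ T))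
    (hgode : ∀ a b : Fin 3, ∀ t ∈ Icc t₀ T,
      HasDerivWithinAt (fun s => g s a b) (-2 * k t a b) (Icc t₀ T) t)
    (hkode : ∀ a b : Fin 3, ∀ t ∈ Icc t₀ T,
      HasDerivWithinAt (fun s => k s a b)
        (kEvolAbs Λ (g t) (k t) (SM t) (ρ t) a b) (Icc t₀ T) t) :
    ∀ t ∈ Icc t₀ T,
      HasDerivWithinAt (fun s => Hub (g s) (k s))
        (-3 * Hub (g t) (k t) ^ 2 + (1 / 2) * ρ t - (1 / 6) * trK (g t) (SM t) + Λ)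
        (Icc t₀ T) t := by
  intro t ht
  have hgpdt := hgpd t ht
  have hUdet : IsUnit (g t).det := hgpdt.det_pos.ne'.isUnit
  have hUnit : IsUnit (g t) := (Matrix.isUnit_iff_isUnit_det _).mpr hUdet
  have hGsym : (g t)ᵀ = g t := by
    have := hgpdt.1
    rwa [Matrix.IsHermitian, Matrix.conjTranspose_eq_transpose_of_trivial] at this
  -- matrix-level derivative of g
  have hG : HasDerivWithinAt g ((-2 : ℝ) • k t) (Icc t₀ T) t := by
    have h2 : HasDerivWithinAt
        (fun s => ∑ a : Fin 3, ∑ b : Fin 3, g s a b • Matrix.single a b (1:ℝ))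
        (∑ a : Fin 3, ∑ b : Fin 3, (-2 * k t a b) • Matrix.single a b (1:ℝ))
        (Icc t₀ T) t :=
      HasDerivWithinAt.fun_sum fun a _ => HasDerivWithinAt.fun_sum fun b _ =>
        (hgode a b t ht).smul_const _
    have h1 : ∀ s : ℝ, ∑ a : Fin 3, ∑ b : Fin 3, g s a b • Matrix.single a b (1:ℝ) = g s := by
      intro s
      ext i j
      simp [Matrix.sum_apply, Matrix.single, Matrix.smul_apply, ite_and, Finset.sum_ite_eq']
    have h3 : (∑ a : Fin 3, ∑ b : Fin 3, (-2 * k t a b) • Matrix.single a b (1:ℝ))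
        = (-2:ℝ) • k t := by
      ext i j
      simp [Matrix.sum_apply, Matrix.single, Matrix.smul_apply, ite_and, Finset.sum_ite_eq']
    rw [h3] at h2
    exact h2.congr (fun s _ => (h1 s).symm) (h1 t).symm
  -- derivative of the inverse
  have hcoe : (↑hUnit.unit⁻¹ : Mat3) = (g t)⁻¹ := by
    rw [Matrix.nonsing_inv_eq_ringInverse, ← Ring.inverse_unit hUnit.unit, hUnit.unit_spec]
  have hFD : HasFDerivAt Ring.inverse
      (-ContinuousLinearMap.mulLeftRight ℝ Mat3 ↑hUnit.unit⁻¹ ↑hUnit.unit⁻¹) (g t) := by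
    have := hasFDerivAt_ringInverse (𝕜 := ℝ) hUnit.unit
    rwa [hUnit.unit_spec] at this
  have hInv : HasDerivWithinAt (fun s => (g s)⁻¹)
      ((2:ℝ) • ((g t)⁻¹ * k t * (g t)⁻¹)) (Icc t₀ T) t := by
    have h0 := hFD.comp_hasDerivWithinAt t hG
    simp only [Function.comp_def] at h0
    have hfn : (fun s => Ring.inverse (g s)) = fun s => (g s)⁻¹ := by
      funext s; rw [Matrix.nonsing_inv_eq_ringInverse]
    rw [hfn] at h0
    refine h0.congr_deriv ?_
    rw [ContinuousLinearMap.neg_apply, ContinuousLinearMap.mulLeftRight_apply, hcoe]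
    rw [Matrix.mul_smul, Matrix.smul_mul, neg_smul, neg_neg]
  -- entrywise derivative of the inverse
  have entryD : ∀ a b : Fin 3, HasDerivWithinAt (fun s => (g s)⁻¹ a b)
      (((2:ℝ) • ((g t)⁻¹ * k t * (g t)⁻¹)) a b) (Icc t₀ T) t := by
    intro a b
    have := (entryCLM a b).hasFDerivAt.comp_hasDerivWithinAt t hInv
    exact this
  have hterm : ∀ a b : Fin 3, HasDerivWithinAt (fun s => (g s)⁻¹ a b * k s a b)
      (((2:ℝ) • ((g t)⁻¹ * k t * (g t)⁻¹)) a b * k t a b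
        + (g t)⁻¹ a b * kEvolAbs Λ (g t) (k t) (SM t) (ρ t) a b) (Icc t₀ T) t :=
    fun a b => (entryD a b).mul (hkode a b t ht)
  have hsum : HasDerivWithinAt (fun s => ∑ a : Fin 3, ∑ b : Fin 3, (g s)⁻¹ a b * k s a b)
      (∑ a : Fin 3, ∑ b : Fin 3, (((2:ℝ) • ((g t)⁻¹ * k t * (g t)⁻¹)) a b * k t a b
        + (g t)⁻¹ a b * kEvolAbs Λ (g t) (k t) (SM t) (ρ t) a b)) (Icc t₀ T) t :=
    HasDerivWithinAt.fun_sum fun a _ => HasDerivWithinAt.fun_sum fun b _ => hterm a b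
  have hmul := hsum.const_mul (1/3 : ℝ)
  have hkey := key Λ (ρ t) (g t) (k t) (SM t) hGsym (hksym t ht) hUdet
  simp only [Hub, trK]
  rw [show (-3 * (1/3 * ∑ a : Fin 3, ∑ b : Fin 3, (g t)⁻¹ a b * k t a b) ^ 2
      + 1/2 * ρ t - 1/6 * ∑ a : Fin 3, ∑ b : Fin 3, (g t)⁻¹ a b * SM t a b + Λ)
    = (1/3) * (∑ a : Fin 3, ∑ b : Fin 3, (((2:ℝ) • ((g t)⁻¹ * k t * (g t)⁻¹)) a b * k t a b
        + (g t)⁻¹ a b * kEvolAbs Λ (g t) (k t) (SM t) (ρ t) a b)) from by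
      rw [hkey]; simp [Hub, trK]]
  exact hmul
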